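/- arXiv:2208.03453 — 4 statements merged into one kernel-verified Lean document; each statement's English description precedes it below -/
import Mathlib

section
/- Let F : C ⥤ X be a reflector with fully faithful right adjoint U. For a pullback square in C with bottom-left corner the unit η_C : C → UF(C) and right leg a morphism U(g) between objects in the image of U, the functor UF preserves this pullback if and only if F preserves it. -/
open CategoryTheory CategoryTheory.Limits

/-- For a reflection `F ⊣ U` with `U` fully faithful, given a pullback square in `C`
whose bottom side is the unit `η_C : C ⟶ UF(C)` and whose right side is `U(g)` for a
morphism `g` of `X`, the endofunctor `L = F ⋙ U` preserves this pullback if and only if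
the reflector `F` preserves it. -/
theorem stmt3 {C : Type u₁} {X : Type u₂} [Category.{v₁} C] [Category.{v₂} X]
    (F : C ⥤ X) (U : X ⥤ C) (adj : F ⊣ U) [U.Full] [U.Faithful]
    {P Co : C} {Xo : X} (p1 : P ⟶ Co) (p2 : P ⟶ U.obj Xo) (g : Xo ⟶ F.obj Co)
    (hpb : IsPullback p1 p2 (adj.unit.app Co) (U.map g)) :
    IsPullback ((F ⋙ U).map p1) ((F ⋙ U).map p2) ((F ⋙ U).map (adj.unit.app Co))
        ((F ⋙ U).map (U.map g)) ↔
      IsPullback (F.map p1) (F.map p2) (F.map (adj.unit.app Co)) (F.map (U.map g)) := by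
  haveI : PreservesLimitsOfSize.{0,0} U := adj.rightAdjoint_preservesLimits
  constructor
  · intro h
    exact h.of_map U (by rw [← F.map_comp, ← F.map_comp, hpb.w])
  · intro h
    exact h.map U
end

section
/- The abelianization functor on groups is not semi-left-exact: the pullback of the abelianization map D₈ → D₈^{ab} ≅ (ℤ/2) × (ℤ/2) along the inclusion of the trivial subgroup 0 → (ℤ/2) × (ℤ/2) is the center Z(D₈) ≅ ℤ/2, and the induced map ℤ/2 → 0 is not the abelianization map of ℤ/2 (i.e., abelianization does not preserve this pullback). -/
open scoped commutatorElement

private def fmap : DihedralGroup 4 → Multiplicative (ZMod 2) × Multiplicative (ZMod 2)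
  | .r i => (Multiplicative.ofAdd (i.val : ZMod 2), Multiplicative.ofAdd 0)
  | .sr i => (Multiplicative.ofAdd (i.val : ZMod 2), Multiplicative.ofAdd 1)

private def f : DihedralGroup 4 →* Multiplicative (ZMod 2) × Multiplicative (ZMod 2) where
  toFun := fmap
  map_one' := by decide
  map_mul' := by decide

private theorem hcomm : commutator (DihedralGroup 4) = Subgroup.center (DihedralGroup 4) := by
  apply le_antisymm
  · rw [commutator_eq_closure, Subgroup.closure_le]
    rintro x ⟨p, q, rfl⟩
    rw [SetLike.mem_coe, Subgroup.mem_center_iff]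
    revert p q
    decide
  · intro z hz
    rw [Subgroup.mem_center_iff] at hz
    have h2 : z = 1 ∨ z = DihedralGroup.r 2 := by revert hz; revert z; decide
    rcases h2 with rfl | rfl
    · exact one_mem _
    · have : DihedralGroup.r 2 = ⁅(DihedralGroup.r 1 : DihedralGroup 4), (DihedralGroup.sr 0 : DihedralGroup 4)⁆ := by
        decide
      rw [this, commutator_def]
      exact Subgroup.commutator_mem_commutator (Subgroup.mem_top _) (Subgroup.mem_top _)

private theorem hker : MonoidHom.ker (Abelianization.of :
    DihedralGroup 4 →* Abelianization (DihedralGroup 4))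
    = Subgroup.center (DihedralGroup 4) := by
  rw [← hcomm]
  ext x
  exact QuotientGroup.eq_one_iff x

private theorem hcard : Nat.card (Subgroup.center (DihedralGroup 4)) = 2 := by
  rw [Nat.card_eq_two_iff]
  have hmem : DihedralGroup.r 2 ∈ Subgroup.center (DihedralGroup 4) := by
    rw [Subgroup.mem_center_iff]; decide
  refine ⟨⟨1, one_mem _⟩, ⟨DihedralGroup.r 2, hmem⟩, by simp only [ne_eq, Subtype.mk.injEq]; decide, ?_⟩
  · ext ⟨z, hz⟩
    rw [Subgroup.mem_center_iff] at hz
    have h2 : z = 1 ∨ z = DihedralGroup.r 2 := by revert hz; revert z; decide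
    simp only [Set.mem_insert_iff, Set.mem_singleton_iff, Set.mem_univ, iff_true]
    rcases h2 with rfl | rfl
    · exact Or.inl rfl
    · exact Or.inr rfl

/-- Abelianization of groups is not semi-left-exact: for the dihedral group `D₈` of
order `8`, the pullback of the abelianization map `D₈ → D₈^{ab} ≅ ℤ/2 × ℤ/2` along the
inclusion of the trivial subgroup is the kernel of the abelianization map, which equals
the center `Z(D₈) ≅ ℤ/2`; and abelianization does not preserve this pullback, since the
abelianization of this kernel is nontrivial (so the induced map `ℤ/2 → 0` is not the
abelianization map of `ℤ/2`). -/
theorem stmt7 :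
    Nonempty (Abelianization (DihedralGroup 4) ≃*
      (Multiplicative (ZMod 2) × Multiplicative (ZMod 2))) ∧
    MonoidHom.ker (Abelianization.of : DihedralGroup 4 →* Abelianization (DihedralGroup 4))
      = Subgroup.center (DihedralGroup 4) ∧
    Nonempty (Subgroup.center (DihedralGroup 4) ≃* Multiplicative (ZMod 2)) ∧
    ¬ Subsingleton (Abelianization (Subgroup.center (DihedralGroup 4))) := by
  have hcardAb : Nat.card (Abelianization (DihedralGroup 4)) = 4 := by
    have h8 : Nat.card (DihedralGroup 4) = 8 := by
      rw [Nat.card_eq_fintype_card]; decide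
    have hc2 : Nat.card (commutator (DihedralGroup 4)) = 2 := by rw [hcomm]; exact hcard
    have := Subgroup.card_eq_card_quotient_mul_card_subgroup (commutator (DihedralGroup 4))
    rw [h8, hc2] at this
    have : Nat.card (DihedralGroup 4 ⧸ commutator (DihedralGroup 4)) = 4 := by omega
    exact this
  refine ⟨?_, hker, ?_, ?_⟩
  · -- abelianization ≃ ℤ/2 × ℤ/2
    have hsurj : Function.Surjective (Abelianization.lift f) := by
      intro p
      have : ∃ x : DihedralGroup 4, f x = p := by revert p; decide
      obtain ⟨x, hx⟩ := this
      exact ⟨Abelianization.of x, by simpa using hx⟩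
    have hbij : Function.Bijective (Abelianization.lift f) := by
      rw [Nat.bijective_iff_surjective_and_card]
      exact ⟨hsurj, by rw [hcardAb]; rw [Nat.card_eq_fintype_card]; decide⟩
    exact ⟨MulEquiv.ofBijective _ hbij⟩
  · have : Fact (Nat.Prime 2) := ⟨Nat.prime_two⟩
    exact ⟨mulEquivOfPrimeCardEq hcard (by rw [Nat.card_eq_fintype_card]; decide)⟩
  · intro h
    open scoped IsMulCommutative in have e := (Abelianization.equivOfComm
      (H := Subgroup.center (DihedralGroup 4)))
    have : Subsingleton (Subgroup.center (DihedralGroup 4)) := e.toEquiv.subsingleton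
    have h1 : (⟨1, one_mem _⟩ : Subgroup.center (DihedralGroup 4)) =
        ⟨DihedralGroup.r 2, by rw [Subgroup.mem_center_iff]; decide⟩ :=
      Subsingleton.elim _ _
    have := congrArg Subtype.val h1
    exact absurd this (by decide)
end

section
/- Let L be an idempotent pointed endofunctor (localization) on a category C with unit η. If e : E → E' is a morphism inverted by L, then η_{E} and η_{E'} ∘ e present the same localization: there is an isomorphism L(E) ≅ L(E') commuting with the coaugmentations. Consequently, a short exact sequence is L-flat if and only if its fiberwise replacement (connected to it by an L-equivalence over the same quotient with the same localized kernel) is L-flat. -/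
open CategoryTheory CategoryTheory.Limits

/-- A short exact sequence in a pointed category: `i` is the kernel of `p` and `p` is
the cokernel of `i`. -/
def IsSES {C : Type u} [Category.{v} C] [HasZeroMorphisms C]
    {K E Q : C} (i : K ⟶ E) (p : E ⟶ Q) : Prop :=
  ∃ w : i ≫ p = 0,
    Nonempty (IsLimit (KernelFork.ofι i w)) ∧
      Nonempty (IsColimit (CokernelCofork.ofπ p w))

/-- SES property transfers across isomorphisms of the middle and kernel objects. -/
lemma isSES_of_iso {C : Type u} [Category.{v} C] [HasZeroMorphisms C]
    {K K' E E' Q : C} (a : K ≅ K') (b : E ≅ E')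
    (i : K ⟶ E) (p : E ⟶ Q) (i' : K' ⟶ E') (p' : E' ⟶ Q)
    (hi : i ≫ b.hom = a.hom ≫ i') (hp : b.hom ≫ p' = p) :
    IsSES i p → IsSES i' p' := by
  rintro ⟨w, ⟨hK⟩, ⟨hQ⟩⟩
  have hib : i = a.hom ≫ i' ≫ b.inv := by
    rw [← Category.assoc, ← hi, Category.assoc, Iso.hom_inv_id, Category.comp_id]
  have hpb : p' = b.inv ≫ p := by rw [← hp, Iso.inv_hom_id_assoc]
  have w' : i' ≫ p' = 0 := by
    have : a.hom ≫ i' ≫ p' = 0 := by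
      rw [hpb, ← Category.assoc, ← Category.assoc, Category.assoc _ _ b.inv, ← hib, w]
    rw [← Category.id_comp (i' ≫ p'), ← Iso.inv_hom_id a, Category.assoc, this, comp_zero]
  refine ⟨w', ⟨?_⟩, ⟨?_⟩⟩
  · refine KernelFork.IsLimit.ofι i' w' (fun {W'} g hg => ?lift) ?_ ?_
    case lift =>
      refine (KernelFork.IsLimit.lift' hK (g ≫ b.inv) ?_).1 ≫ a.hom
      rw [Category.assoc, ← hp, Iso.inv_hom_id_assoc, hg]
    · intro W' g hg
      have hl := (KernelFork.IsLimit.lift' hK (g ≫ b.inv)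
        (by rw [Category.assoc, ← hp, Iso.inv_hom_id_assoc, hg])).2
      simp only [Fork.ι_ofι] at hl
      rw [Category.assoc, ← hi, ← Category.assoc, hl, Category.assoc,
        Iso.inv_hom_id, Category.comp_id]
    · intro W' g hg m hm
      have hl := (KernelFork.IsLimit.lift' hK (g ≫ b.inv)
        (by rw [Category.assoc, ← hp, Iso.inv_hom_id_assoc, hg])).2
      simp only [Fork.ι_ofι] at hl
      have hmm : (m ≫ a.inv) ≫ i = g ≫ b.inv := by
        rw [Category.assoc, hib, Iso.inv_hom_id_assoc, ← Category.assoc, hm]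
      have := Fork.IsLimit.hom_ext hK (by
        simp only [Fork.ι_ofι]
        exact hmm.trans hl.symm)
      rw [← Category.comp_id m, ← Iso.inv_hom_id a, ← Category.assoc, this]
  · refine CokernelCofork.IsColimit.ofπ p' w' (fun {W'} g hg => ?desc) ?_ ?_
    case desc =>
      refine (CokernelCofork.IsColimit.desc' hQ (b.hom ≫ g) ?_).1
      rw [← Category.assoc, hi, Category.assoc, hg, comp_zero]
    · intro W' g hg
      have hd := (CokernelCofork.IsColimit.desc' hQ (b.hom ≫ g)
        (by rw [← Category.assoc, hi, Category.assoc, hg, comp_zero])).2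
      simp only [Cofork.π_ofπ] at hd
      rw [hpb, Category.assoc, hd, Iso.inv_hom_id_assoc]
    · intro W' g hg m hm
      have hd := (CokernelCofork.IsColimit.desc' hQ (b.hom ≫ g)
        (by rw [← Category.assoc, hi, Category.assoc, hg, comp_zero])).2
      simp only [Cofork.π_ofπ] at hd
      refine Cofork.IsColimit.hom_ext hQ ?_
      simp only [Cofork.π_ofπ]
      have : p ≫ m = b.hom ≫ g := by rw [← hp, Category.assoc, hm]
      exact this.trans hd.symm

/-- Let `(L, η)` be an idempotent pointed endofunctor (localization).  If `e : E ⟶ E'`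
is inverted by `L`, then `η_E` and `η_{E'} ∘ e` present the same localization: there is
an isomorphism `L(E) ≅ L(E')` commuting with the coaugmentations.  Consequently, a short
exact sequence `K → E → Q` is `L`-flat if and only if its fiberwise replacement
`L(K) → E' → Q` (connected to it by an `L`-equivalence `e` over the same quotient, with
the same localized kernel) is `L`-flat. -/
theorem stmt13 {C : Type u} [Category.{v} C] [HasZeroMorphisms C]
    (L : C ⥤ C) (η : 𝟭 C ⟶ L)
    (hidem₁ : ∀ X : C, IsIso (L.map (η.app X)))
    (hidem₂ : ∀ X : C, L.map (η.app X) = η.app (L.obj X))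
    {E E' : C} (e : E ⟶ E') (he : IsIso (L.map e)) :
    (∃ φ : L.obj E ≅ L.obj E', η.app E ≫ φ.hom = e ≫ η.app E') ∧
    (∀ {K Q : C} (i : K ⟶ E) (p : E ⟶ Q) (i' : L.obj K ⟶ E') (p' : E' ⟶ Q),
      IsSES i p → IsSES i' p' →
      i ≫ e = η.app K ≫ i' → e ≫ p' = p →
      (IsSES (L.map i) (L.map p) ↔ IsSES (L.map i') (L.map p'))) := by
  constructor
  · exact ⟨asIso (L.map e), (η.naturality e).symm⟩
  · intro K Q i p i' p' _ _ hie hep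
    have haK : IsIso (L.map (η.app K)) := hidem₁ K
    have hcomm : L.map i ≫ L.map e = L.map (η.app K) ≫ L.map i' := by
      rw [← L.map_comp, ← L.map_comp, hie]
    have hpp : L.map e ≫ L.map p' = L.map p := by
      rw [← L.map_comp, hep]
    constructor
    · exact isSES_of_iso (asIso (L.map (η.app K))) (asIso (L.map e))
        (L.map i) (L.map p) (L.map i') (L.map p') hcomm hpp
    · refine isSES_of_iso (asIso (L.map (η.app K))).symm (asIso (L.map e)).symm
        (L.map i') (L.map p') (L.map i) (L.map p) ?_ ?_
      · simp only [Iso.symm_hom, asIso_inv]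
        rw [IsIso.eq_inv_comp, ← Category.assoc, ← hcomm, Category.assoc,
          IsIso.hom_inv_id, Category.comp_id]
      · simp only [Iso.symm_hom, asIso_inv]
        rw [← hpp, IsIso.inv_hom_id_assoc]
end

section
/- Let C be the category of groups and L = UF the composite of the abelianization reflector with the inclusion of abelian groups. Given a short exact sequence 0 → K → E → Q → 0 of groups such that 0 → K^{ab} → E^{ab} → Q^{ab} → 0 is exact (an L-flat sequence), and a pullback of this sequence along any group homomorphism X → Q, the resulting pulled-back sequence 0 → K → P → X → 0 is again L-flat, i.e., 0 → K^{ab} → P^{ab} → X^{ab} → 0 is exact. -/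
/-- The pullback `P = E ×_Q X = {(e, x) | p e = f x}` as a subgroup of `E × X`. -/
def pullbackSubgroup {E X Q : Type*} [Group E] [Group X] [Group Q]
    (p : E →* Q) (f : X →* Q) : Subgroup (E × X) where
  carrier := {ex | p ex.1 = f ex.2}
  mul_mem' := by
    intro a b ha hb
    simp only [Set.mem_setOf_eq, Prod.fst_mul, Prod.snd_mul, map_mul] at *
    rw [ha, hb]
  one_mem' := by simp
  inv_mem' := by
    intro a ha
    simp only [Set.mem_setOf_eq, Prod.fst_inv, Prod.snd_inv, map_inv] at *
    rw [ha]

lemma mem_pullbackSubgroup {E X Q : Type*} [Group E] [Group X] [Group Q]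
    (p : E →* Q) (f : X →* Q) (ex : E × X) :
    ex ∈ pullbackSubgroup p f ↔ p ex.1 = f ex.2 := Iff.rfl

/-- Conditional flatness of abelianization in the category of groups: given a short
exact sequence `0 → K →ⁱ E →ᵖ Q → 0` whose image under abelianization
`0 → K^{ab} → E^{ab} → Q^{ab} → 0` is again exact (an `L`-flat sequence, for
`L = U ∘ ab`), and any homomorphism `f : X →* Q`, the pulled-back sequence
`0 → K → P → X → 0` (with `P = E ×_Q X`) is again `L`-flat:
`0 → K^{ab} → P^{ab} → X^{ab} → 0` is exact. -/
theorem stmt16 {K E Q X : Type u} [Group K] [Group E] [Group Q] [Group X]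
    (i : K →* E) (p : E →* Q) (f : X →* Q)
    (hi : Function.Injective i) (hp : Function.Surjective p) (hex : i.range = p.ker)
    (habi : Function.Injective (Abelianization.map i))
    (habp : Function.Surjective (Abelianization.map p))
    (habex : (Abelianization.map i).range = (Abelianization.map p).ker) :
    ∀ (j : K →* pullbackSubgroup p f) (q : pullbackSubgroup p f →* X),
      (∀ k : K, (j k : E × X) = (i k, 1)) →
      (∀ x : pullbackSubgroup p f, q x = (x : E × X).2) →
      (Function.Injective (Abelianization.map j) ∧
        Function.Surjective (Abelianization.map q) ∧
        (Abelianization.map j).range = (Abelianization.map q).ker) := by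
  intro j q hj hq
  -- `q` is surjective
  have hqsurj : Function.Surjective q := by
    intro x
    obtain ⟨e, he⟩ := hp (f x)
    exact ⟨⟨(e, x), he⟩, by rw [hq]⟩
  -- `ker q = range j`
  have hker : q.ker = j.range := by
    ext w
    constructor
    · intro hw
      have h2 : (w : E × X).2 = 1 := by rw [← hq w]; exact hw
      have h1 : p (w : E × X).1 = 1 := by
        have hm := (mem_pullbackSubgroup p f _).mp w.2
        rw [hm, h2, map_one]
      obtain ⟨k, hk⟩ : (w : E × X).1 ∈ i.range := by rw [hex]; exact h1
      refine ⟨k, ?_⟩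
      apply Subtype.ext
      rw [hj k]
      exact Prod.ext hk h2.symm
    · rintro ⟨k, rfl⟩
      have : q (j k) = (j k : E × X).2 := hq _
      rw [MonoidHom.mem_ker, this, hj k]
  -- injectivity of the abelianized `j`
  have hjinj : Function.Injective (Abelianization.map j) := by
    rw [injective_iff_map_eq_one]
    intro a ha
    induction a using QuotientGroup.induction_on with
    | H k =>
      have h1 : Abelianization.map j (Abelianization.of k) = 1 := ha
      rw [Abelianization.map_of] at h1
      have hjk : j k ∈ commutator (pullbackSubgroup p f) :=
        (QuotientGroup.eq_one_iff _).mp h1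
      -- push via the first projection to `E`
      have hik : i k ∈ commutator E := by
        set φ : pullbackSubgroup p f →* E :=
          (MonoidHom.fst E X).comp (pullbackSubgroup p f).subtype with hφ
        have : φ (j k) ∈ Subgroup.map φ (commutator (pullbackSubgroup p f)) :=
          Subgroup.mem_map_of_mem φ hjk
        have hle : Subgroup.map φ (commutator (pullbackSubgroup p f)) ≤ commutator E := by
          rw [commutator_def, Subgroup.map_commutator, commutator_def]
          exact Subgroup.commutator_mono le_top le_top
        have hφjk : φ (j k) = i k := by
          show ((j k : E × X)).1 = i k
          rw [hj k]
        rw [hφjk] at this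
        exact hle this
      have : Abelianization.map i (Abelianization.of k) = 1 := by
        rw [Abelianization.map_of]
        exact (QuotientGroup.eq_one_iff _).mpr hik
      have := habi (by rw [this, map_one] : Abelianization.map i (Abelianization.of k)
        = Abelianization.map i 1)
      exact this
  refine ⟨hjinj, ?_, ?_⟩
  · -- surjectivity of the abelianized `q`
    intro b
    induction b using QuotientGroup.induction_on with
    | H x =>
      obtain ⟨w, hw⟩ := hqsurj x
      refine ⟨Abelianization.of w, ?_⟩
      rw [Abelianization.map_of, hw]
      rfl
  · -- exactness in the middle
    have hmapc : Subgroup.map q (commutator (pullbackSubgroup p f)) = commutator X := by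
      rw [commutator_def, Subgroup.map_commutator,
        Subgroup.map_top_of_surjective q hqsurj, commutator_def]
    have hsup : Subgroup.comap q (commutator X)
        = commutator (pullbackSubgroup p f) ⊔ j.range := by
      rw [← hmapc, Subgroup.comap_map_eq, hker]
    ext b
    constructor
    · rintro ⟨a, rfl⟩
      induction a using QuotientGroup.induction_on with
      | H k =>
        have : q (j k) = 1 := by rw [hq, hj k]
        show Abelianization.map q (Abelianization.map j (Abelianization.of k)) = 1
        rw [Abelianization.map_of, Abelianization.map_of, this]
        exact map_one _
    · intro hb
      induction b using QuotientGroup.induction_on with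
      | H w =>
        have hb' : Abelianization.of (q w) = 1 := by
          rw [← Abelianization.map_of]; exact hb
        have hqw : q w ∈ commutator X := (QuotientGroup.eq_one_iff _).mp hb'
        have hw : w ∈ j.range ⊔ commutator (pullbackSubgroup p f) := by
          rw [sup_comm, ← hsup]
          exact hqw
        rw [← SetLike.mem_coe, Subgroup.mul_normal] at hw
        obtain ⟨h, hh, n, hn, rfl⟩ := hw
        obtain ⟨k, rfl⟩ := hh
        refine ⟨Abelianization.of k, ?_⟩
        show Abelianization.map j (Abelianization.of k) = Abelianization.of (j k * n)
        rw [Abelianization.map_of, map_mul Abelianization.of]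
        have : Abelianization.of n = 1 := (QuotientGroup.eq_one_iff _).mpr hn
        rw [this, mul_one]
end
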